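/- Let g be a finite-dimensional complex semisimple Lie algebra with Killing form κ. Let p ⊆ g be a Lie subalgebra, let n ⊆ p be a Lie ideal of p such that p = {y ∈ g : κ(y,z) = 0 for all z ∈ n}, and let m ⊆ p be a linear subspace with p = m ⊕ n as vector spaces. If X ∈ n satisfies [p, X] = n, then dim g^X ≤ dim g^Y for every Y ∈ n, where g^x = {y ∈ g : [y, x] = 0} denotes the centralizer of x in g. -/

import Mathlib

/-- The centralizer `g^x = {y ∈ g : [y, x] = 0}` of an element `x` of a Lie algebra,
as a submodule. -/
def lieCentralizer {g : Type*} [LieRing g] [LieAlgebra ℂ g] (x : g) : Submodule ℂ g where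
  carrier := {y | ⁅y, x⁆ = 0}
  add_mem' := by
    intro a b ha hb
    simp only [Set.mem_setOf_eq, add_lie] at *
    rw [ha, hb, add_zero]
  zero_mem' := by simp
  smul_mem' := by
    intro c a ha
    simp only [Set.mem_setOf_eq, smul_lie] at *
    rw [ha, smul_zero]

/-- Right bracket with `x`, as a linear map `y ↦ ⁅y, x⁆`. -/
def rbracket {g : Type*} [LieRing g] [LieAlgebra ℂ g] (x : g) : g →ₗ[ℂ] g where
  toFun y := ⁅y, x⁆
  map_add' a b := add_lie a b x
  map_smul' c a := smul_lie c a x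

lemma ker_rbracket {g : Type*} [LieRing g] [LieAlgebra ℂ g] (x : g) :
    LinearMap.ker (rbracket x) = lieCentralizer x := rfl

/-- A Richardson element `X` (i.e. `X ∈ n` with `[p, X] = n`) has centralizer of
minimal dimension among all elements of the nilradical `n`. -/
theorem richardson_minimal_centralizer
    {g : Type*} [LieRing g] [LieAlgebra ℂ g] [Module.Finite ℂ g]
    [LieAlgebra.IsSemisimple ℂ g]
    (p : LieSubalgebra ℂ g) (n m : Submodule ℂ g)
    (hnp : n ≤ p.toSubmodule)
    (hideal : ∀ y ∈ p, ∀ z ∈ n, ⁅y, z⁆ ∈ n)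
    (hperp : ∀ y : g, y ∈ p ↔ ∀ z ∈ n, killingForm ℂ g y z = 0)
    (hsup : m ⊔ n = p.toSubmodule) (hinf : m ⊓ n = ⊥)
    (X : g) (hX : X ∈ n)
    (hrich : Submodule.span ℂ {z : g | ∃ y ∈ p, z = ⁅y, X⁆} = n) :
    ∀ Y ∈ n, Module.finrank ℂ (lieCentralizer X) ≤ Module.finrank ℂ (lieCentralizer Y) := by
  intro Y hY
  have : FiniteDimensional ℂ g := inferInstance
  -- the image of `p` under bracketing with `X` is `n`
  have hmap : Submodule.map (rbracket X) p.toSubmodule = n := by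
    rw [← hrich]
    apply le_antisymm
    · rintro z ⟨y, hy, rfl⟩
      exact Submodule.subset_span ⟨y, hy, rfl⟩
    · rw [Submodule.span_le]
      rintro z ⟨y, hy, rfl⟩
      exact ⟨y, hy, rfl⟩
  -- the centralizer of `X` is contained in `p`
  have hcent_le : lieCentralizer X ≤ p.toSubmodule := by
    intro y hy
    have hy' : ⁅y, X⁆ = 0 := hy
    rw [LieSubalgebra.mem_toSubmodule, hperp]
    intro z hz
    have hker : n ≤ LinearMap.ker (killingForm ℂ g y) := by
      rw [← hrich, Submodule.span_le]
      rintro _ ⟨w, hw, rfl⟩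
      simp only [SetLike.mem_coe, LinearMap.mem_ker]
      have h1 : killingForm ℂ g y ⁅X, w⁆ = killingForm ℂ g ⁅y, X⁆ w :=
        (LieModule.traceForm_apply_lie_apply ℂ g g y X w).symm
      calc killingForm ℂ g y ⁅w, X⁆ = - killingForm ℂ g y ⁅X, w⁆ := by
            have hsk : (⁅w, X⁆ : g) = -⁅X, w⁆ := neg_eq_iff_eq_neg.mp (lie_skew X w)
            rw [hsk, map_neg]
        _ = - killingForm ℂ g ⁅y, X⁆ w := by rw [h1]
        _ = 0 := by rw [hy']; simp
    exact hker hz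
  -- rank-nullity for `rbracket X` restricted to `p`
  have hX_eq : Module.finrank ℂ n + Module.finrank ℂ (lieCentralizer X)
      = Module.finrank ℂ p.toSubmodule := by
    have h := LinearMap.finrank_range_add_finrank_ker ((rbracket X).domRestrict p.toSubmodule)
    rw [LinearMap.range_domRestrict, hmap, LinearMap.ker_domRestrict, ker_rbracket] at h
    rwa [(Submodule.comapSubtypeEquivOfLe hcent_le).finrank_eq] at h
  -- pick a complement of `p`
  obtain ⟨c, hc⟩ := Submodule.exists_isCompl p.toSubmodule
  have hc_dim : Module.finrank ℂ p.toSubmodule + Module.finrank ℂ c = Module.finrank ℂ g :=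
    Submodule.finrank_add_eq_of_isCompl hc
  -- rank-nullity for `rbracket Y`
  have hY_eq : Module.finrank ℂ (LinearMap.range (rbracket Y))
      + Module.finrank ℂ (lieCentralizer Y) = Module.finrank ℂ g := by
    have h := LinearMap.finrank_range_add_finrank_ker (rbracket Y)
    rwa [ker_rbracket] at h
  -- bound the rank of `rbracket Y`
  have hrange : Module.finrank ℂ (LinearMap.range (rbracket Y))
      ≤ Module.finrank ℂ n + Module.finrank ℂ c := by
    have h1 : LinearMap.range (rbracket Y)
        = Submodule.map (rbracket Y) p.toSubmodule ⊔ Submodule.map (rbracket Y) c := by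
      rw [← Submodule.map_sup, hc.sup_eq_top, Submodule.map_top]
    have h2 : Submodule.map (rbracket Y) p.toSubmodule ≤ n := by
      rintro _ ⟨y, hy, rfl⟩
      exact hideal y hy Y hY
    calc Module.finrank ℂ (LinearMap.range (rbracket Y))
        ≤ Module.finrank ℂ (Submodule.map (rbracket Y) p.toSubmodule)
          + Module.finrank ℂ (Submodule.map (rbracket Y) c) := by
          rw [h1]
          have := Submodule.finrank_sup_add_finrank_inf_eq
            (Submodule.map (rbracket Y) p.toSubmodule) (Submodule.map (rbracket Y) c)
          omega
      _ ≤ Module.finrank ℂ n + Module.finrank ℂ c :=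
          Nat.add_le_add (Submodule.finrank_mono h2) (Submodule.finrank_map_le _ _)
  omega
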